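/- Let q be a prime power and S a set of q+1 points in PG(2,q) whose degree is n (i.e., n is the maximum size of the intersection of S with a line), where 3 ≤ n ≤ q+1. Then the number of lines disjoint from S is at least n(q+2−n) − (q+1). -/

import Mathlib

/-- The projective plane `PG(2,q)`: points are 1-dimensional subspaces of `F³`. -/
abbrev PG (F : Type*) [Field F] := Projectivization F (Fin 3 → F)

/-- Incidence between a point and a line of `PG(2,q)` (lines given by dual coordinates):
`a·x + b·y + c·z = 0`. -/
def PGIncident {F : Type*} [Field F] (p l : PG F) : Prop :=
  ∑ j : Fin 3, p.rep j * l.rep j = 0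

/-- The number `u_i(S)` of lines of `PG(2,q)` meeting the point set `S` in exactly `i` points. -/
noncomputable def uIdx {F : Type*} [Field F] (S : Set (PG F)) (i : ℕ) : ℕ :=
  Nat.card {l : PG F // Nat.card {p : PG F // p ∈ S ∧ PGIncident p l} = i}

section Aux
open Matrix Projectivization Finset

variable {F : Type*} [Field F]

lemma pgi_iff (p l : PG F) : PGIncident p l ↔ p.rep ⬝ᵥ l.rep = 0 := Iff.rfl

lemma pgi_comm {p l : PG F} : PGIncident p l ↔ PGIncident l p := by
  rw [pgi_iff, pgi_iff, dotProduct_comm]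

lemma unique_thru {a b x y : PG F} (hab : a ≠ b) (h1 : PGIncident a x)
    (h2 : PGIncident b x) (h3 : PGIncident a y) (h4 : PGIncident b y) : x = y := by
  have hind : LinearIndependent F ![a.rep, b.rep] := by
    have := (independent_pair_iff_ne a b).mpr hab
    rw [independent_iff] at this
    convert this using 1
    funext i
    fin_cases i <;> rfl
    rfl
  set M : Matrix (Fin 2) (Fin 3) F := ![a.rep, b.rep] with hM
  have hrank : M.rank = 2 := by
    simpa using hind.rank_matrix
  have hker : Module.finrank F (LinearMap.ker M.mulVecLin) = 1 := by
    have h := LinearMap.finrank_range_add_finrank_ker M.mulVecLin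
    rw [Matrix.rank] at hrank
    simp only [Module.finrank_fin_fun] at h
    omega
  have hmem : ∀ z : Fin 3 → F, a.rep ⬝ᵥ z = 0 → b.rep ⬝ᵥ z = 0 →
      z ∈ LinearMap.ker M.mulVecLin := by
    intro z hz1 hz2
    rw [LinearMap.mem_ker, Matrix.mulVecLin_apply]
    funext i
    fin_cases i <;> simp [Matrix.mulVecLin_apply, Matrix.mulVec, hM, hz1, hz2]
  have hx : x.rep ∈ LinearMap.ker M.mulVecLin := hmem _ h1 h2
  have hy : y.rep ∈ LinearMap.ker M.mulVecLin := hmem _ h3 h4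
  have hspan : (Submodule.span F {x.rep}) = LinearMap.ker M.mulVecLin := by
    apply Submodule.eq_of_le_of_finrank_le
    · rw [Submodule.span_le, Set.singleton_subset_iff]; exact hx
    · rw [hker, finrank_span_singleton x.rep_nonzero]
  have : y.rep ∈ Submodule.span F {x.rep} := hspan ▸ hy
  obtain ⟨c, hc⟩ := Submodule.mem_span_singleton.mp this
  have : Projectivization.mk F y.rep y.rep_nonzero = Projectivization.mk F x.rep x.rep_nonzero := by
    rw [mk_eq_mk_iff']
    exact ⟨c, hc⟩
  rw [mk_rep, mk_rep] at this
  exact this.symm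

lemma card_incident [Fintype F] (l : PG F) :
    Nat.card {p : PG F // PGIncident p l} = Fintype.card F + 1 := by
  classical
  set q := Fintype.card F with hq
  set M : Matrix (Fin 1) (Fin 3) F := ![l.rep] with hM
  set W := LinearMap.ker M.mulVecLin with hWdef
  have hmemW : ∀ z : Fin 3 → F, z ∈ W ↔ z ⬝ᵥ l.rep = 0 := by
    intro z
    rw [hWdef, LinearMap.mem_ker, Matrix.mulVecLin_apply]
    constructor
    · intro h
      have := congrFun h 0
      simpa [hM, Matrix.mulVecLin_apply, Matrix.mulVec, dotProduct_comm] using this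
    · intro h
      funext i
      fin_cases i
      simpa [hM, Matrix.mulVecLin_apply, Matrix.mulVec, dotProduct_comm] using h
  have hrank : M.rank = 1 := by
    have hind : LinearIndependent F M := by
      apply linearIndependent_unique_iff.mpr
      simpa [hM] using l.rep_nonzero
    simpa using hind.rank_matrix
  have hW2 : Module.finrank F W = 2 := by
    have h := LinearMap.finrank_range_add_finrank_ker M.mulVecLin
    have h2 : Module.finrank F (LinearMap.range M.mulVecLin) = 1 := hrank
    rw [h2, Module.finrank_fin_fun] at h
    rw [hWdef]
    omega
  have cardW : Fintype.card W = q ^ 2 := by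
    rw [Module.card_eq_pow_finrank (K := F) (V := W), hW2]
  set N := {v : Fin 3 → F // v ∈ W ∧ v ≠ 0} with hN
  have cardN : Nat.card N = q ^ 2 - 1 := by
    have e : N ≃ {x : W // ¬ x = 0} := {
      toFun := fun v => ⟨⟨v.1, v.2.1⟩, fun h => v.2.2 (by simpa using congrArg Subtype.val h)⟩
      invFun := fun x => ⟨x.1.1, x.1.2, fun h => x.2 (Subtype.ext (by simp [h]))⟩
      left_inv := fun v => rfl
      right_inv := fun x => rfl }
    rw [Nat.card_congr e, Nat.card_eq_fintype_card, Fintype.card_subtype_compl,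
      Fintype.card_subtype_eq, cardW]
  have hg : Function.Bijective
      (fun pa : {p : PG F // PGIncident p l} × Fˣ => (⟨(pa.2 : F) • pa.1.1.rep,
        by
          refine ⟨(hmemW _).mpr ?_, ?_⟩
          · have h0 := (pgi_iff _ _).mp pa.1.2
            rw [smul_dotProduct, h0, smul_zero]
          · simp [smul_ne_zero_iff, Units.ne_zero, pa.1.1.rep_nonzero]⟩ : N)) := by
    constructor
    · rintro ⟨⟨p, hp⟩, a⟩ ⟨⟨p', hp'⟩, a'⟩ h
      have h1 : (a : F) • p.rep = (a' : F) • p'.rep := congrArg Subtype.val h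
      have hpp' : p = p' := by
        have h3 : Projectivization.mk F p.rep p.rep_nonzero =
            Projectivization.mk F p'.rep p'.rep_nonzero := by
          rw [mk_eq_mk_iff]
          refine ⟨a⁻¹ * a', ?_⟩
          rw [Units.smul_def]
          push_cast
          rw [mul_smul, ← h1, ← mul_smul]
          simp
        rwa [mk_rep, mk_rep] at h3
      subst hpp'
      have haa : (a : F) = (a' : F) := smul_left_injective F p.rep_nonzero h1
      have : a = a' := Units.ext haa
      subst this
      rfl
    · rintro ⟨v, hvW, hv0⟩
      obtain ⟨a, ha⟩ := exists_smul_eq_mk_rep F v hv0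
      have hpinc : PGIncident (Projectivization.mk F v hv0) l := by
        rw [pgi_iff, ← ha, Units.smul_def, smul_dotProduct, (hmemW v).mp hvW, smul_zero]
      refine ⟨(⟨Projectivization.mk F v hv0, hpinc⟩, a⁻¹), ?_⟩
      apply Subtype.ext
      show (↑a⁻¹ : F) • (Projectivization.mk F v hv0).rep = v
      rw [← ha, Units.smul_def, ← mul_smul]
      push_cast
      simp
  have key : Nat.card ({p : PG F // PGIncident p l} × Fˣ) = Nat.card N :=
    Nat.card_eq_of_bijective _ hg
  rw [Nat.card_prod, cardN, Nat.card_eq_fintype_card (α := Fˣ), Fintype.card_units] at key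
  have hq2 : 2 ≤ q := Fintype.one_lt_card
  have : Nat.card {p : PG F // PGIncident p l} * (q - 1) = (q + 1) * (q - 1) := by
    rw [key]
    have h1 : (1:ℕ) ≤ q ^ 2 := Nat.one_le_pow _ _ (by omega)
    have h3 : (1:ℕ) ≤ q := by omega
    have : q ^ 2 - 1 = (q + 1) * (q - 1) := by zify [h1, h3]; ring
    rw [this]
  have hpos : 0 < q - 1 := by omega
  exact Nat.eq_of_mul_eq_mul_right hpos this

lemma card_incident' [Fintype F] (p : PG F) :
    Nat.card {m : PG F // PGIncident p m} = Fintype.card F + 1 := by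
  rw [Nat.card_congr (Equiv.subtypeEquivRight (fun m => pgi_comm)), card_incident]

end Aux

open Matrix Projectivization Finset in
/-- if a `(q+1)`-set `S` in `PG(2,q)` has degree `n` (some line meets `S`
in exactly `n` points and no line meets `S` in more), with `3 ≤ n ≤ q+1`, then the
number of lines disjoint from `S` is at least `n(q+2−n) − (q+1)`. -/
theorem stmt4 (F : Type*) [Field F] [Fintype F] (S : Set (PG F))
    (hS : Nat.card S = Fintype.card F + 1) (n : ℕ)
    (hn3 : 3 ≤ n) (hnq : n ≤ Fintype.card F + 1)
    (hmax : ∃ l : PG F, Nat.card {p : PG F // p ∈ S ∧ PGIncident p l} = n)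
    (hbd : ∀ l : PG F, Nat.card {p : PG F // p ∈ S ∧ PGIncident p l} ≤ n) :
    n * (Fintype.card F + 2 - n) - (Fintype.card F + 1) ≤ uIdx S 0 := by
  classical
  have : Finite (PG F) := Quotient.finite _
  have : Fintype (PG F) := Fintype.ofFinite _
  set q := Fintype.card F with hq
  -- translation to Finset cards
  have hcard : ∀ P : PG F → Prop, Nat.card {x : PG F // P x} = (univ.filter P).card := by
    intro P
    rw [Nat.card_eq_fintype_card]
    convert Fintype.card_subtype P
  set cnt : PG F → ℕ := fun m => (univ.filter (fun p => p ∈ S ∧ PGIncident p m)).card with hcnt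
  have hcnt' : ∀ m, Nat.card {p : PG F // p ∈ S ∧ PGIncident p m} = cnt m := by
    intro m
    rw [hcard, hcnt]
    congr!
  obtain ⟨l₀, hl₀⟩ := hmax
  rw [hcnt'] at hl₀
  -- skew lines
  set skew : Finset (PG F) := univ.filter (fun m => cnt m = 0) with hskew
  have huIdx : uIdx S 0 = skew.card := by
    rw [uIdx, hskew]
    rw [hcard (fun l => Nat.card {p : PG F // p ∈ S ∧ PGIncident p l} = 0)]
    congr 1
    ext m
    simp only [Finset.mem_filter, Finset.mem_univ, true_and]
    rw [hcnt' m]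
  -- line point counts as Finsets
  have hline : ∀ m : PG F, (univ.filter (fun p => PGIncident p m)).card = q + 1 := by
    intro m; rw [← hcard, card_incident]
  have hpencil : ∀ p : PG F, (univ.filter (fun m => PGIncident p m)).card = q + 1 := by
    intro p; rw [← hcard, card_incident']
  -- S as Finset
  set Sf : Finset (PG F) := S.toFinset with hSf
  have hSfcard : Sf.card = q + 1 := by
    rw [hSf, Set.toFinset_card, ← Nat.card_eq_fintype_card, hS]
  have hSmem : ∀ p, p ∈ Sf ↔ p ∈ S := fun p => Set.mem_toFinset
  -- points of S on l₀  :  n points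
  have hA : (Sf.filter (fun p => PGIncident p l₀)).card = n := by
    rw [← hl₀, hcnt]
    congr 1
    ext p
    simp [hSmem p, and_comm]
  -- points of S off l₀
  set Soff : Finset (PG F) := Sf.filter (fun p => ¬ PGIncident p l₀) with hSoff
  have hSoffcard : Soff.card = q + 1 - n := by
    have := Finset.card_filter_add_card_filter_not (s := Sf)
      (p := fun p => PGIncident p l₀)
    rw [hA, hSfcard] at this
    rw [hSoff]
    omega
  -- points of l₀ not in S
  set T : Finset (PG F) := univ.filter (fun p => PGIncident p l₀ ∧ p ∉ S) with hT
  have hTcard : T.card = q + 1 - n := by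
    have h1 : (univ.filter (fun p => PGIncident p l₀ ∧ p ∈ S)).card = n := by
      rw [← hl₀, hcnt]; congr 1; ext p; simp [and_comm]
    have h2 : (univ.filter (fun p => PGIncident p l₀ ∧ p ∈ S)).card + T.card
        = (univ.filter (fun p => PGIncident p l₀)).card := by
      rw [hT, ← Finset.filter_filter, ← Finset.filter_filter,
        Finset.card_filter_add_card_filter_not]
    rw [h1, hline l₀] at h2
    omega
  -- choice function : for non-skew lines pick a point of S on it
  set pick : PG F → PG F := fun m =>
    if h : ∃ p, p ∈ S ∧ PGIncident p m then Classical.choose h else l₀ with hpick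
  have hpick_spec : ∀ m, cnt m ≠ 0 → pick m ∈ S ∧ PGIncident (pick m) m := by
    intro m hm
    have hne : ∃ p, p ∈ S ∧ PGIncident p m := by
      rw [hcnt] at hm
      obtain ⟨p, hp⟩ := Finset.card_ne_zero.mp hm
      exact ⟨p, (Finset.mem_filter.mp hp).2⟩
    rw [hpick]
    simp only [dif_pos hne]
    exact Classical.choose_spec hne
  -- the skew lines through each Q ∈ T
  set A : PG F → Finset (PG F) := fun Q => skew.filter (fun m => PGIncident Q m) with hAdef
  have hcnt_l₀ : cnt l₀ ≠ 0 := by rw [hl₀]; omega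
  -- each A Q has at least n-1 elements
  have hAcard : ∀ Q ∈ T, n - 1 ≤ (A Q).card := by
    intro Q hQ
    rw [hT, Finset.mem_filter] at hQ
    obtain ⟨-, hQl₀, hQS⟩ := hQ
    set B : Finset (PG F) := univ.filter (fun m => PGIncident Q m ∧ m ≠ l₀ ∧ cnt m ≠ 0) with hB
    -- B injects into Soff
    have hBcard : B.card ≤ q + 1 - n := by
      rw [← hSoffcard]
      apply Finset.card_le_card_of_injOn pick
      · intro m hm
        rw [Finset.mem_coe, Finset.mem_filter] at hm
        obtain ⟨-, hQm, hml₀, hcm⟩ := hm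
        obtain ⟨hpS, hpm⟩ := hpick_spec m hcm
        rw [Finset.mem_coe, hSoff, Finset.mem_filter, hSmem]
        refine ⟨hpS, ?_⟩
        intro hpl₀
        exact hml₀ (unique_thru (fun h => hQS (by rw [← h]; exact hpS)) hpm hQm hpl₀ hQl₀)
      · intro m hm m' hm' hmm'
        rw [Finset.mem_coe, hB, Finset.mem_filter] at hm hm'
        obtain ⟨-, hQm, hml₀, hcm⟩ := hm
        obtain ⟨-, hQm', hml₀', hcm'⟩ := hm'
        obtain ⟨hpS, hpm⟩ := hpick_spec m hcm
        obtain ⟨hpS', hpm'⟩ := hpick_spec m' hcm'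
        rw [← hmm'] at hpm'
        exact unique_thru (fun h => hQS (by rw [← h]; exact hpS)) hpm hQm hpm' hQm'
    -- lines through Q are covered
    have hcover : (univ.filter (fun m => PGIncident Q m)) ⊆ (A Q) ∪ B ∪ {l₀} := by
      intro m hm
      rw [Finset.mem_filter] at hm
      obtain ⟨-, hQm⟩ := hm
      by_cases h1 : m = l₀
      · simp [h1]
      by_cases h2 : cnt m = 0
      · apply Finset.mem_union_left; apply Finset.mem_union_left
        rw [hAdef, hskew]; simp [h2, hQm]
      · apply Finset.mem_union_left; apply Finset.mem_union_right
        rw [hB]; simp [hQm, h1, h2]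
    have hcov2 : q + 1 ≤ (A Q).card + B.card + 1 := by
      calc q + 1 = (univ.filter (fun m => PGIncident Q m)).card := (hpencil Q).symm
        _ ≤ ((A Q) ∪ B ∪ {l₀}).card := Finset.card_le_card hcover
        _ ≤ ((A Q) ∪ B).card + ({l₀} : Finset (PG F)).card := Finset.card_union_le _ _
        _ ≤ (A Q).card + B.card + 1 := by
            have := Finset.card_union_le (A Q) B
            simp only [Finset.card_singleton]
            omega
    omega
  -- the A Q are pairwise disjoint
  have hdisj : (T : Set (PG F)).PairwiseDisjoint A := by
    intro Q hQ Q' hQ' hne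
    simp only [Finset.disjoint_left]
    intro m hm hm'
    rw [hAdef, Finset.mem_filter] at hm hm'
    obtain ⟨hmskew, hQm⟩ := hm
    obtain ⟨-, hQm'⟩ := hm'
    rw [hskew, Finset.mem_filter] at hmskew
    rw [Finset.mem_coe, hT, Finset.mem_filter] at hQ hQ'
    have : m = l₀ := unique_thru hne hQm hQm' hQ.2.1 hQ'.2.1
    exact hcnt_l₀ (by rw [← this]; exact hmskew.2)
  -- assemble
  have hsum : T.card * (n - 1) ≤ skew.card := by
    calc T.card * (n - 1) = T.card • (n-1) := by simp
      _ ≤ ∑ Q ∈ T, (A Q).card := Finset.card_nsmul_le_sum T _ _ hAcard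
      _ = (T.biUnion A).card := (Finset.card_biUnion (fun Q hQ Q' hQ' h => hdisj hQ hQ' h)).symm
      _ ≤ skew.card := by
          apply Finset.card_le_card
          intro m hm
          obtain ⟨Q, -, hm⟩ := Finset.mem_biUnion.mp hm
          exact (Finset.mem_filter.mp hm).1
  rw [huIdx]
  have harith : n * (q + 2 - n) - (q + 1) ≤ (q + 1 - n) * (n - 1) := by
    obtain ⟨k, hk⟩ := Nat.exists_eq_add_of_le hnq
    have e1 : q + 2 - n = k + 1 := by omega
    have e2 : q + 1 - n = k := by omega
    rw [e1, e2]
    obtain ⟨m, hm⟩ : ∃ m, n = m + 1 := ⟨n - 1, by omega⟩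
    have key : n * (k + 1) = k * (n - 1) + k + n := by
      subst hm; simp only [Nat.add_sub_cancel]; ring
    rw [key]
    generalize k * (n - 1) = a
    omega
  calc n * (q + 2 - n) - (q + 1) ≤ (q + 1 - n) * (n - 1) := harith
    _ = T.card * (n - 1) := by rw [hTcard]
    _ ≤ skew.card := hsum
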